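/- arXiv:2412.21134 — 3 statements merged into one kernel-verified Lean document; each statement's English description precedes it below -/
import Mathlib

section
/- In the weak path completion variant of the bilevel shortest path problem (with nonnegative leader costs c and follower costs d, and assuming at least one s-t-path exists), there exists a pair (X, Y) with X ⊆ E^ℓ and Y ⊆ E^f such that X is an optimal leader's solution, Y is an optimal follower's response to X (under the optimistic tie-breaking minimizing c second), and X ∪ Y is itself exactly an s-t-path. -/
/-- Lexicographic minimization over a fintype: minimize `f`, then `g`, then `h`. -/
lemma exists_lexmin3 {β : Type*} [Fintype β] (p : β → Prop) (hp : ∃ x, p x)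
    (f g : β → ℝ) (h : β → ℕ) :
    ∃ x, p x ∧ (∀ y, p y → f x ≤ f y) ∧
      (∀ y, p y → f y = f x → g x ≤ g y) ∧
      (∀ y, p y → f y = f x → g y = g x → h x ≤ h y) := by
  classical
  obtain ⟨x0, hx0⟩ := hp
  obtain ⟨x1, hx1, hf⟩ := Finset.exists_min_image (Finset.univ.filter p) f
    ⟨x0, Finset.mem_filter.2 ⟨Finset.mem_univ _, hx0⟩⟩
  obtain ⟨x2, hx2, hg⟩ := Finset.exists_min_image
    (Finset.univ.filter fun x => p x ∧ f x = f x1) g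
    ⟨x1, Finset.mem_filter.2 ⟨Finset.mem_univ _, (Finset.mem_filter.1 hx1).2, rfl⟩⟩
  obtain ⟨x3, hx3, hh⟩ := Finset.exists_min_image
    (Finset.univ.filter fun x => p x ∧ f x = f x1 ∧ g x = g x2) h
    ⟨x2, Finset.mem_filter.2 ⟨Finset.mem_univ _, (Finset.mem_filter.1 hx2).2.1,
      (Finset.mem_filter.1 hx2).2.2, rfl⟩⟩
  obtain ⟨-, hp3, hf3, hg3⟩ := Finset.mem_filter.1 hx3
  refine ⟨x3, hp3, ?_, ?_, ?_⟩
  · intro y hy; rw [hf3]; exact hf y (Finset.mem_filter.2 ⟨Finset.mem_univ _, hy⟩)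
  · intro y hy hfy; rw [hg3]
    exact hg y (Finset.mem_filter.2 ⟨Finset.mem_univ _, hy, by rw [hfy, hf3]⟩)
  · intro y hy hfy hgy
    exact hh y (Finset.mem_filter.2 ⟨Finset.mem_univ _, hy, by rw [hfy, hf3], by rw [hgy, hg3]⟩)

/-- `Y` is an optimal follower's response to `X`: it is feasible and lexicographically
minimal w.r.t. (d-cost, c-cost, cardinality) among feasible responses. -/
def OptResp {E : Type*} [DecidableEq E] (Ef : Finset E) (Paths : Set (Finset E))
    (c d : E → ℝ) (X Y : Finset E) : Prop :=
  (Y ⊆ Ef ∧ ∃ P ∈ Paths, P ⊆ X ∪ Y) ∧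
  (∀ Y' : Finset E, (Y' ⊆ Ef ∧ ∃ P ∈ Paths, P ⊆ X ∪ Y') →
    (∑ e ∈ Y, d e) ≤ ∑ e ∈ Y', d e) ∧
  (∀ Y' : Finset E, (Y' ⊆ Ef ∧ ∃ P ∈ Paths, P ⊆ X ∪ Y') →
    (∑ e ∈ Y', d e) = (∑ e ∈ Y, d e) → (∑ e ∈ Y, c e) ≤ ∑ e ∈ Y', c e) ∧
  (∀ Y' : Finset E, (Y' ⊆ Ef ∧ ∃ P ∈ Paths, P ⊆ X ∪ Y') →
    (∑ e ∈ Y', d e) = (∑ e ∈ Y, d e) → (∑ e ∈ Y', c e) = (∑ e ∈ Y, c e) →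
    Y.card ≤ Y'.card)

/-- In the weak path completion variant there exists an optimal leader's solution `X`
together with an optimal (optimistic) follower's response `Y` such that `X ∪ Y` is
exactly an s-t-path. -/
theorem stmt_1 {E : Type*} [DecidableEq E] [Fintype E]
    (El Ef : Finset E) (hdisj : Disjoint El Ef)
    (Paths : Set (Finset E)) (hPaths : Paths.Nonempty)
    (hedges : ∀ P ∈ Paths, P ⊆ El ∪ Ef)
    (c : E → ℝ) (hc : ∀ e, 0 ≤ c e)
    (d : E → ℝ) (hd : ∀ e, 0 ≤ d e) :
    ∃ X Y : Finset E, X ⊆ El ∧ Y ⊆ Ef ∧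
      -- Y is weak-feasible for X
      (∃ P ∈ Paths, P ⊆ X ∪ Y) ∧
      -- Y is an optimal follower's response to X (minimizing d, then c)
      (∀ Y' : Finset E, Y' ⊆ Ef → (∃ P ∈ Paths, P ⊆ X ∪ Y') →
        (∑ e ∈ Y, d e) ≤ ∑ e ∈ Y', d e) ∧
      (∀ Y' : Finset E, Y' ⊆ Ef → (∃ P ∈ Paths, P ⊆ X ∪ Y') →
        (∑ e ∈ Y', d e) = (∑ e ∈ Y, d e) → (∑ e ∈ Y, c e) ≤ ∑ e ∈ Y', c e) ∧
      -- X is an optimal leader's solution: any leader's choice X' together with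
      -- any optimal follower's response Y' to it costs the leader at least c(X ∪ Y)
      (∀ X' Y' : Finset E, X' ⊆ El → Y' ⊆ Ef →
        (∃ P ∈ Paths, P ⊆ X' ∪ Y') →
        (∀ Y'' : Finset E, Y'' ⊆ Ef → (∃ P ∈ Paths, P ⊆ X' ∪ Y'') →
          (∑ e ∈ Y', d e) ≤ ∑ e ∈ Y'', d e) →
        (∀ Y'' : Finset E, Y'' ⊆ Ef → (∃ P ∈ Paths, P ⊆ X' ∪ Y'') →
          (∑ e ∈ Y'', d e) = (∑ e ∈ Y', d e) → (∑ e ∈ Y', c e) ≤ ∑ e ∈ Y'', c e) →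
        (∑ e ∈ X ∪ Y, c e) ≤ ∑ e ∈ X' ∪ Y', c e) ∧
      -- X ∪ Y is exactly an s-t-path
      X ∪ Y ∈ Paths := by
  classical
  obtain ⟨P0, hP0⟩ := hPaths
  -- existence of optimal responses whenever some feasible response exists
  have optExists : ∀ X : Finset E, (∃ Y, Y ⊆ Ef ∧ ∃ P ∈ Paths, P ⊆ X ∪ Y) →
      ∃ Y, OptResp Ef Paths c d X Y := by
    intro X hX
    obtain ⟨Y, h1, h2, h3, h4⟩ := exists_lexmin3
      (fun Y : Finset E => Y ⊆ Ef ∧ ∃ P ∈ Paths, P ⊆ X ∪ Y) hX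
      (fun Y => ∑ e ∈ Y, d e) (fun Y => ∑ e ∈ Y, c e) Finset.card
    exact ⟨Y, h1, h2, h3, h4⟩
  -- there is at least one admissible leader/optimal-follower pair
  have pairEx : ∃ q : Finset E × Finset E, q.1 ⊆ El ∧ OptResp Ef Paths c d q.1 q.2 := by
    obtain ⟨Y, hY⟩ := optExists El ⟨Ef, le_refl Ef, P0, hP0, hedges P0 hP0⟩
    exact ⟨(El, Y), le_refl El, hY⟩
  -- choose a pair minimizing c(X ∪ Y) and then |X|
  obtain ⟨q, ⟨hXEl, hOptXY⟩, hmin1, -, hmin2⟩ := exists_lexmin3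
    (fun q : Finset E × Finset E => q.1 ⊆ El ∧ OptResp Ef Paths c d q.1 q.2) pairEx
    (fun q => ∑ e ∈ q.1 ∪ q.2, c e) (fun _ => (0 : ℝ)) (fun q => q.1.card)
  obtain ⟨X, Y⟩ := q
  simp only at hXEl hOptXY hmin1 hmin2
  obtain ⟨⟨hYEf, P, hPmem, hPsub⟩, hdmin, hcmin, hcardmin⟩ := hOptXY
  -- Y ⊆ P
  have hYP : Y ⊆ P := by
    have hfeas : (Y ∩ P) ⊆ Ef ∧ ∃ P' ∈ Paths, P' ⊆ X ∪ (Y ∩ P) := by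
      refine ⟨(Finset.inter_subset_left).trans hYEf, P, hPmem, fun e he => ?_⟩
      rcases Finset.mem_union.1 (hPsub he) with h | h
      · exact Finset.mem_union_left _ h
      · exact Finset.mem_union_right _ (Finset.mem_inter.2 ⟨h, he⟩)
    have hsub : Y ∩ P ⊆ Y := Finset.inter_subset_left
    have hdle : (∑ e ∈ Y ∩ P, d e) ≤ ∑ e ∈ Y, d e :=
      Finset.sum_le_sum_of_subset_of_nonneg hsub (fun i _ _ => hd i)
    have hdeq : (∑ e ∈ Y ∩ P, d e) = ∑ e ∈ Y, d e :=
      le_antisymm hdle (hdmin _ hfeas)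
    have hcle : (∑ e ∈ Y ∩ P, c e) ≤ ∑ e ∈ Y, c e :=
      Finset.sum_le_sum_of_subset_of_nonneg hsub (fun i _ _ => hc i)
    have hceq : (∑ e ∈ Y ∩ P, c e) = ∑ e ∈ Y, c e :=
      le_antisymm hcle (hcmin _ hfeas hdeq)
    have hcard : Y.card ≤ (Y ∩ P).card := hcardmin _ hfeas hdeq hceq
    have : Y ∩ P = Y := Finset.eq_of_subset_of_card_le hsub (by omega)
    calc Y = Y ∩ P := this.symm
      _ ⊆ P := Finset.inter_subset_right
  -- Y is an optimal response to X ∩ P as well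
  have hOpt' : OptResp Ef Paths c d (X ∩ P) Y := by
    have hmono : ∀ Y' : Finset E, (Y' ⊆ Ef ∧ ∃ P' ∈ Paths, P' ⊆ (X ∩ P) ∪ Y') →
        (Y' ⊆ Ef ∧ ∃ P' ∈ Paths, P' ⊆ X ∪ Y') := by
      rintro Y' ⟨h1, P', hP', h2⟩
      exact ⟨h1, P', hP', h2.trans (Finset.union_subset_union Finset.inter_subset_left le_rfl)⟩
    refine ⟨⟨hYEf, P, hPmem, fun e he => ?_⟩, fun Y' h => hdmin Y' (hmono Y' h),
      fun Y' h => hcmin Y' (hmono Y' h), fun Y' h => hcardmin Y' (hmono Y' h)⟩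
    rcases Finset.mem_union.1 (hPsub he) with h | h
    · exact Finset.mem_union_left _ (Finset.mem_inter.2 ⟨h, he⟩)
    · exact Finset.mem_union_right _ h
  -- X ⊆ P
  have hXP : X ⊆ P := by
    have hq' : (X ∩ P, Y).1 ⊆ El ∧ OptResp Ef Paths c d (X ∩ P, Y).1 (X ∩ P, Y).2 :=
      ⟨Finset.inter_subset_left.trans hXEl, hOpt'⟩
    have hsub : (X ∩ P) ∪ Y ⊆ X ∪ Y :=
      Finset.union_subset_union Finset.inter_subset_left le_rfl
    have hcle : (∑ e ∈ (X ∩ P) ∪ Y, c e) ≤ ∑ e ∈ X ∪ Y, c e :=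
      Finset.sum_le_sum_of_subset_of_nonneg hsub (fun i _ _ => hc i)
    have hceq : (∑ e ∈ (X ∩ P) ∪ Y, c e) = ∑ e ∈ X ∪ Y, c e :=
      le_antisymm hcle (hmin1 _ hq')
    have hcard : X.card ≤ (X ∩ P).card := hmin2 _ hq' hceq trivial
    have : X ∩ P = X := Finset.eq_of_subset_of_card_le Finset.inter_subset_left (by omega)
    calc X = X ∩ P := this.symm
      _ ⊆ P := Finset.inter_subset_right
  have hXYP : X ∪ Y = P := le_antisymm (Finset.union_subset hXP hYP) hPsub
  refine ⟨X, Y, hXEl, hYEf, ⟨P, hPmem, hPsub⟩,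
    fun Y' h1 h2 => hdmin Y' ⟨h1, h2⟩, fun Y' h1 h2 => hcmin Y' ⟨h1, h2⟩, ?_, hXYP ▸ hPmem⟩
  -- leader optimality
  intro X' Y' hX'El hY'Ef hfeas' hd' hc'
  obtain ⟨Y0, hOpt0⟩ := optExists X' ⟨Y', hY'Ef, hfeas'⟩
  obtain ⟨⟨hY0Ef, hfeas0⟩, hd0, hc0, hcard0⟩ := id hOpt0
  have hdeq : (∑ e ∈ Y0, d e) = ∑ e ∈ Y', d e :=
    le_antisymm (hd0 Y' ⟨hY'Ef, hfeas'⟩) (hd' Y0 hY0Ef hfeas0)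
  have hceq : (∑ e ∈ Y0, c e) = ∑ e ∈ Y', c e :=
    le_antisymm (hc0 Y' ⟨hY'Ef, hfeas'⟩ hdeq.symm) (hc' Y0 hY0Ef hfeas0 hdeq)
  have hdisj0 : Disjoint X' Y0 := hdisj.mono hX'El hY0Ef
  have hdisj' : Disjoint X' Y' := hdisj.mono hX'El hY'Ef
  have : (∑ e ∈ X' ∪ Y0, c e) = ∑ e ∈ X' ∪ Y', c e := by
    rw [Finset.sum_union hdisj0, Finset.sum_union hdisj', hceq]
  calc (∑ e ∈ X ∪ Y, c e) ≤ ∑ e ∈ X' ∪ Y0, c e :=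
        hmin1 (X', Y0) ⟨hX'El, hOpt0⟩
    _ = ∑ e ∈ X' ∪ Y', c e := this
end

section
/- For every instance I of the bilevel shortest path problem (directed or undirected, with a feasible s-t-path), the leader's optimal value in the strong path completion variant is at most the leader's optimal value in the weak path completion variant: OPT_strong(I) ≤ OPT_weak(I). -/
open scoped ENNReal

/-- The leader's optimal value in the strong path completion variant is at most the
leader's optimal value in the weak path completion variant: `OPT_strong ≤ OPT_weak`. -/
theorem stmt_2 {E : Type*} [DecidableEq E] [Fintype E]
    (El Ef : Finset E) (hdisj : Disjoint El Ef)
    (Paths : Set (Finset E)) (hPaths : Paths.Nonempty)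
    (hedges : ∀ P ∈ Paths, P ⊆ El ∪ Ef)
    (c d : E → ℝ≥0∞) :
    -- OPT_strong: infimum of c(X ∪ Y) over leader's choices X and follower-optimal
    -- responses Y with X ∪ Y exactly a path
    (⨅ (X : Finset E) (Y : Finset E)
        (_ : X ⊆ El ∧ Y ⊆ Ef ∧ X ∪ Y ∈ Paths ∧
          ∀ Y' : Finset E, Y' ⊆ Ef → X ∪ Y' ∈ Paths → (∑ e ∈ Y, d e) ≤ ∑ e ∈ Y', d e),
        ∑ e ∈ X ∪ Y, c e) ≤
    -- OPT_weak: same but with X ∪ Y merely containing a path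
    (⨅ (X : Finset E) (Y : Finset E)
        (_ : X ⊆ El ∧ Y ⊆ Ef ∧ (∃ P ∈ Paths, P ⊆ X ∪ Y) ∧
          ∀ Y' : Finset E, Y' ⊆ Ef → (∃ P ∈ Paths, P ⊆ X ∪ Y') →
            (∑ e ∈ Y, d e) ≤ ∑ e ∈ Y', d e),
        ∑ e ∈ X ∪ Y, c e) := by
  refine le_iInf fun X => le_iInf fun Y => le_iInf fun h => ?_
  obtain ⟨hX, hY, ⟨P, hP, hPsub⟩, hopt⟩ := h
  -- The strong solution: X' = P ∩ El, Y' = P ∩ Ef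
  have hXl : P ∩ El ⊆ X := by
    intro e he
    simp only [Finset.mem_inter] at he
    rcases Finset.mem_union.1 (hPsub he.1) with h1 | h1
    · exact h1
    · exact absurd he.2 (Finset.disjoint_right.1 hdisj (hY h1))
  have hYf : P ∩ Ef ⊆ Y := by
    intro e he
    simp only [Finset.mem_inter] at he
    rcases Finset.mem_union.1 (hPsub he.1) with h1 | h1
    · exact absurd (hX h1) (Finset.disjoint_right.1 hdisj he.2)
    · exact h1
  have hunion : P ∩ El ∪ P ∩ Ef = P := by
    rw [← Finset.inter_union_distrib_left]
    exact Finset.inter_eq_left.mpr (hedges P hP)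
  have key : (P ∩ El) ⊆ El ∧ (P ∩ Ef) ⊆ Ef ∧ (P ∩ El) ∪ (P ∩ Ef) ∈ Paths ∧
      ∀ Y' : Finset E, Y' ⊆ Ef → (P ∩ El) ∪ Y' ∈ Paths →
        (∑ e ∈ P ∩ Ef, d e) ≤ ∑ e ∈ Y', d e := by
    refine ⟨Finset.inter_subset_right, Finset.inter_subset_right, by rwa [hunion], ?_⟩
    intro Y' hY' hP'
    calc (∑ e ∈ P ∩ Ef, d e) ≤ ∑ e ∈ Y, d e :=
          Finset.sum_le_sum_of_subset hYf
      _ ≤ ∑ e ∈ Y', d e := by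
          refine hopt Y' hY' ⟨(P ∩ El) ∪ Y', hP', ?_⟩
          exact Finset.union_subset_union_left hXl
  calc (⨅ (X : Finset E) (Y : Finset E)
        (_ : X ⊆ El ∧ Y ⊆ Ef ∧ X ∪ Y ∈ Paths ∧
          ∀ Y' : Finset E, Y' ⊆ Ef → X ∪ Y' ∈ Paths → (∑ e ∈ Y, d e) ≤ ∑ e ∈ Y', d e),
        ∑ e ∈ X ∪ Y, c e)
      ≤ ∑ e ∈ (P ∩ El) ∪ (P ∩ Ef), c e := by
        exact iInf_le_of_le (P ∩ El) (iInf_le_of_le (P ∩ Ef) (iInf_le _ key))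
    _ ≤ ∑ e ∈ X ∪ Y, c e := by
        rw [hunion]
        exact Finset.sum_le_sum_of_subset hPsub
end

section
/- In the reduction graph for the independent-set hardness proof of the weak variant, suppose X ⊆ E^ℓ and Y ⊆ E^f are such that X ∪ Y is a simple s-t-path containing no shortcut edge. If for some vertex v of the original graph, X contains exactly one of the two leader's edges {v₁,v₂} and {v₂,v₃}, then X ∪ Y must contain a shortcut edge — a contradiction. Hence for every v, X contains either both or neither of {v₁,v₂}, {v₂,v₃}. -/
namespace Stmt17

/-- Relation generating the reduction graph on `Fin n × Fin 3`: for each `i` the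
leader's edges `{(i,0),(i,1)}`, `{(i,1),(i,2)}` and the follower's direct edge
`{(i,0),(i,2)}`; connector edges `{(i,2),(i+1,0)}`; and shortcut edges
`{(i,1),(j,1)}` for every edge `{i,j}` of `G`. -/
def rel (n : ℕ) (G : SimpleGraph (Fin n)) :
    Fin n × Fin 3 → Fin n × Fin 3 → Prop := fun x y =>
  (x.1 = y.1 ∧ ((x.2 = 0 ∧ y.2 = 1) ∨ (x.2 = 1 ∧ y.2 = 2) ∨ (x.2 = 0 ∧ y.2 = 2))) ∨
  ((y.1 : ℕ) = (x.1 : ℕ) + 1 ∧ x.2 = 2 ∧ y.2 = 0) ∨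
  (x.2 = 1 ∧ y.2 = 1 ∧ G.Adj x.1 y.1)

/-- The reduction graph. -/
def redGraph (n : ℕ) (G : SimpleGraph (Fin n)) : SimpleGraph (Fin n × Fin 3) :=
  SimpleGraph.fromRel (rel n G)

/-- The leader's edges. -/
def leaderEdges (n : ℕ) : Set (Sym2 (Fin n × Fin 3)) :=
  {e | ∃ i : Fin n, e = s((i, (0 : Fin 3)), (i, 1)) ∨ e = s((i, (1 : Fin 3)), (i, 2))}

/-- The shortcut edges. -/
def shortcuts (n : ℕ) : Set (Sym2 (Fin n × Fin 3)) :=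
  {e | ∃ i j : Fin n, e = s((i, (1 : Fin 3)), (j, 1))}

open SimpleGraph

lemma head_edge {V} {G : SimpleGraph V} {u v : V} (w : G.Walk u v) (hw : ¬w.Nil) :
    ∃ x, s(u, x) ∈ w.edges := by
  cases w with
  | nil => simp at hw
  | @cons _ b _ h w' => exact ⟨b, by simp⟩

lemma two_edges {V} {G : SimpleGraph V} {s t v : V} [DecidableEq V]
    (p : G.Walk s t) (hp : p.IsPath) (hv : v ∈ p.support) (hs : v ≠ s) (ht : v ≠ t) :
    ∃ e₁ e₂, e₁ ∈ p.edges ∧ e₂ ∈ p.edges ∧ e₁ ≠ e₂ ∧ v ∈ e₁ ∧ v ∈ e₂ := by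
  set q := p.takeUntil v hv with hq
  set r := p.dropUntil v hv with hr
  have hspec : q.append r = p := p.take_spec hv
  have hqn : ¬q.reverse.Nil := Walk.not_nil_of_ne hs
  have hrn : ¬r.Nil := Walk.not_nil_of_ne ht
  obtain ⟨x, hx⟩ := head_edge q.reverse hqn
  obtain ⟨y, hy⟩ := head_edge r hrn
  rw [Walk.edges_reverse, List.mem_reverse] at hx
  have hedges : p.edges = q.edges ++ r.edges := by rw [← hspec, Walk.edges_append]
  have hnd := hp.isTrail.edges_nodup
  rw [hedges] at hnd
  have hdisj := List.disjoint_of_nodup_append hnd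
  refine ⟨s(v, x), s(v, y), ?_, ?_, ?_, ?_, ?_⟩
  · rw [hedges]; exact List.mem_append_left _ hx
  · rw [hedges]; exact List.mem_append_right _ hy
  · intro h; exact hdisj hx (h ▸ hy)
  · simp
  · simp

lemma adj_one (n : ℕ) (G : SimpleGraph (Fin n)) (i : Fin n) (b : Fin n × Fin 3)
    (hadj : (redGraph n G).Adj (i, 1) b)
    (hns : s(((i, (1 : Fin 3)) : Fin n × Fin 3), b) ∉ shortcuts n) :
    b = (i, (0 : Fin 3)) ∨ b = (i, 2) := by
  rw [redGraph, fromRel_adj] at hadj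
  obtain ⟨-, h | h⟩ := hadj
  · rcases h with ⟨h1, ⟨h2, h3⟩ | ⟨h2, h3⟩ | ⟨h2, h3⟩⟩ | ⟨h1, h2, h3⟩ | ⟨h1, h2, h3⟩
    · simp at h2
    · right; exact Prod.ext h1.symm h3
    · simp at h2
    · simp at h2
    · exact absurd ⟨i, b.1, by rw [show b = (b.1, (1 : Fin 3)) from Prod.ext rfl h2]⟩ hns
  · rcases h with ⟨h1, ⟨h2, h3⟩ | ⟨h2, h3⟩ | ⟨h2, h3⟩⟩ | ⟨h1, h2, h3⟩ | ⟨h1, h2, h3⟩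
    · left; exact Prod.ext h1 h2
    · simp at h3
    · simp at h3
    · simp at h3
    · exact absurd ⟨i, b.1, by rw [show b = (b.1, (1 : Fin 3)) from Prod.ext rfl h1]⟩ hns

lemma classify (n : ℕ) (G : SimpleGraph (Fin n)) (e : Sym2 (Fin n × Fin 3))
    (he : e ∈ (redGraph n G).edgeSet) (i : Fin n)
    (hv : ((i, (1 : Fin 3)) : Fin n × Fin 3) ∈ e) (hns : e ∉ shortcuts n) :
    e = s((i, (0 : Fin 3)), (i, 1)) ∨ e = s((i, (1 : Fin 3)), (i, 2)) := by
  induction e using Sym2.ind with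
  | _ a b =>
    rw [SimpleGraph.mem_edgeSet] at he
    rw [Sym2.mem_iff] at hv
    rcases hv with rfl | rfl
    · rcases adj_one n G i b he hns with rfl | rfl
      · left; exact Sym2.eq_swap
      · right; rfl
    · have he' : (redGraph n G).Adj (i, 1) a := he.symm
      have hns' : s(((i, (1 : Fin 3)) : Fin n × Fin 3), a) ∉ shortcuts n := by
        rwa [Sym2.eq_swap]
      rcases adj_one n G i a he' hns' with rfl | rfl
      · left; rfl
      · right; exact Sym2.eq_swap

/-- If `X ∪ Y` is the edge set of a simple `s`-`t`-path containing no shortcut edge,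
then for every vertex `i` of the original graph, `X` contains either both or neither of
the two leader's edges `{(i,0),(i,1)}` and `{(i,1),(i,2)}`. -/
theorem stmt_17 (n : ℕ) (hn : 0 < n) (G : SimpleGraph (Fin n))
    (X Y : Set (Sym2 (Fin n × Fin 3)))
    (hXl : X ⊆ leaderEdges n)
    (hY : Y ⊆ (redGraph n G).edgeSet \ leaderEdges n)
    (p : (redGraph n G).Walk (⟨0, hn⟩, 0) (⟨n - 1, by omega⟩, 2))
    (hp : p.IsPath)
    (hedges : ∀ e, e ∈ p.edges ↔ e ∈ X ∪ Y)
    (hnoshort : ∀ e ∈ X ∪ Y, e ∉ shortcuts n) :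
    ∀ i : Fin n,
      (s((i, (0 : Fin 3)), (i, 1)) ∈ X ↔ s((i, (1 : Fin 3)), (i, 2)) ∈ X) := by
  intro i
  have key : ∀ e ∈ p.edges, ((i, (1 : Fin 3)) : Fin n × Fin 3) ∈ e →
      e = s((i, (0 : Fin 3)), (i, 1)) ∨ e = s((i, (1 : Fin 3)), (i, 2)) := fun e he hv =>
    classify n G e (p.edges_subset_edgeSet he) i hv (hnoshort e ((hedges e).mp he))
  have inX : ∀ e ∈ p.edges, e ∈ leaderEdges n → e ∈ X := by
    intro e he hl
    rcases (hedges e).mp he with h | h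
    · exact h
    · exact absurd hl (hY h).2
  have both : ((i, (1 : Fin 3)) : Fin n × Fin 3) ∈ p.support →
      s((i, (0 : Fin 3)), (i, 1)) ∈ X ∧ s((i, (1 : Fin 3)), (i, 2)) ∈ X := by
    intro hv
    have hs : ((i, (1 : Fin 3)) : Fin n × Fin 3) ≠ (⟨0, hn⟩, 0) := by
      intro h
      have := congrArg Prod.snd h
      simp at this
    have ht : ((i, (1 : Fin 3)) : Fin n × Fin 3) ≠ (⟨n - 1, by omega⟩, 2) := by
      intro h
      have := congrArg Prod.snd h
      simp at this
    obtain ⟨e₁, e₂, he₁, he₂, hne, hv₁, hv₂⟩ := two_edges p hp hv hs ht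
    have h1 : s((i, (0 : Fin 3)), (i, 1)) ∈ leaderEdges n := ⟨i, Or.inl rfl⟩
    have h2 : s((i, (1 : Fin 3)), (i, 2)) ∈ leaderEdges n := ⟨i, Or.inr rfl⟩
    rcases key e₁ he₁ hv₁ with rfl | rfl <;> rcases key e₂ he₂ hv₂ with rfl | rfl
    · exact absurd rfl hne
    · exact ⟨inX _ he₁ h1, inX _ he₂ h2⟩
    · exact ⟨inX _ he₂ h1, inX _ he₁ h2⟩
    · exact absurd rfl hne
  constructor
  · intro h
    have hpe : s((i, (0 : Fin 3)), (i, 1)) ∈ p.edges := (hedges _).mpr (Or.inl h)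
    exact (both (p.snd_mem_support_of_mem_edges hpe)).2
  · intro h
    have hpe : s((i, (1 : Fin 3)), (i, 2)) ∈ p.edges := (hedges _).mpr (Or.inl h)
    exact (both (p.fst_mem_support_of_mem_edges hpe)).1

end Stmt17
end
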